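/- Let L > 2π be fixed. For every c ∈ (-1,1) with ω := 1 - c² ∈ (4π²/L², 1), there exists a smooth, even, nonconstant, L-periodic function φ: ℝ → ℝ which has exactly two zeros in [0,L) and satisfies the ordinary differential equation -φ''(x) + ωφ(x) - φ(x)⁵ = 0 for all x ∈ ℝ. -/

import Mathlib

open Real Set

open MeasureTheory intervalIntegral Filter
open scoped ContDiff

noncomputable section
namespace CnoidalAux

/-- The squared angular speed. -/
def Q (w m θ : ℝ) : ℝ := m ^ 4 * (1 + Real.cos θ ^ 2 + Real.cos θ ^ 4) / 3 - w

def F (w m θ : ℝ) : ℝ := Real.sqrt (Q w m θ)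

def G (w m t : ℝ) : ℝ := ∫ s in (0:ℝ)..t, (F w m s)⁻¹

variable {w m : ℝ}

lemma Q_lower (hw : 0 < w) (hm : 3 * w < m ^ 4) (θ : ℝ) : m ^ 4 / 3 - w ≤ Q w m θ := by
  have h1 : (0:ℝ) ≤ Real.cos θ ^ 2 := sq_nonneg _
  have h2 : (0:ℝ) ≤ Real.cos θ ^ 4 := by positivity
  have hm4 : (0:ℝ) < m ^ 4 := by nlinarith
  unfold Q; nlinarith

lemma Q_pos (hw : 0 < w) (hm : 3 * w < m ^ 4) (θ : ℝ) : 0 < Q w m θ :=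
  lt_of_lt_of_le (by linarith) (Q_lower hw hm θ)

lemma Q_le (hw : 0 < w) (θ : ℝ) : Q w m θ ≤ m ^ 4 := by
  have h1 : Real.cos θ ^ 2 ≤ 1 := cos_sq_le_one θ
  have h2 : Real.cos θ ^ 4 ≤ 1 := by
    have := abs_cos_le_one θ
    nlinarith [sq_nonneg (Real.cos θ), cos_sq_le_one θ]
  have hm4 : (0:ℝ) ≤ m ^ 4 := by positivity
  unfold Q; nlinarith

lemma F_pos (hw : 0 < w) (hm : 3 * w < m ^ 4) (θ : ℝ) : 0 < F w m θ :=
  Real.sqrt_pos.mpr (Q_pos hw hm θ)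

lemma F_le (hw : 0 < w) (θ : ℝ) : F w m θ ≤ m ^ 2 := by
  have : Q w m θ ≤ (m ^ 2) ^ 2 := by rw [← pow_mul]; exact Q_le hw θ
  calc F w m θ ≤ Real.sqrt ((m ^ 2) ^ 2) := Real.sqrt_le_sqrt this
    _ = m ^ 2 := Real.sqrt_sq (by positivity)

lemma contDiff_Q : ContDiff ℝ ∞ (Q w m) := by
  unfold Q
  have h : ContDiff ℝ ∞ fun θ : ℝ => 1 + Real.cos θ ^ 2 + Real.cos θ ^ 4 :=
    (contDiff_const.add (Real.contDiff_cos.pow 2)).add (Real.contDiff_cos.pow 4)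
  exact ((contDiff_const.mul h).div_const _).sub contDiff_const

lemma contDiff_F (hw : 0 < w) (hm : 3 * w < m ^ 4) : ContDiff ℝ ∞ (F w m) := by
  rw [contDiff_iff_contDiffAt]
  intro θ
  exact (contDiff_Q.contDiffAt).sqrt (ne_of_gt (Q_pos hw hm θ))

lemma continuous_invF (hw : 0 < w) (hm : 3 * w < m ^ 4) : Continuous fun s => (F w m s)⁻¹ :=
  ((contDiff_F hw hm).continuous).inv₀ fun θ => ne_of_gt (F_pos hw hm θ)

lemma hasDerivAt_G (hw : 0 < w) (hm : 3 * w < m ^ 4) (t : ℝ) :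
    HasDerivAt (G w m) ((F w m t)⁻¹) t :=
  ((continuous_invF hw hm).integral_hasStrictDerivAt 0 t).hasDerivAt

lemma strictMono_G (hw : 0 < w) (hm : 3 * w < m ^ 4) : StrictMono (G w m) := by
  apply strictMono_of_deriv_pos
  intro t
  rw [(hasDerivAt_G hw hm t).deriv]
  exact inv_pos.mpr (F_pos hw hm t)

lemma Q_periodic : Function.Periodic (Q w m) π := by
  intro θ; unfold Q; rw [Real.cos_add_pi]; ring

lemma invF_periodic : Function.Periodic (fun s => (F w m s)⁻¹) π := by
  intro θ; simp only [F, Q_periodic θ]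

lemma G_zero : G w m 0 = 0 := by simp [G]

lemma G_add_pi (hw : 0 < w) (hm : 3 * w < m ^ 4) (t : ℝ) : G w m (t + π) = G w m t + G w m π := by
  have hint : ∀ a b : ℝ, IntervalIntegrable (fun s => (F w m s)⁻¹) volume a b :=
    fun a b => (continuous_invF hw hm).intervalIntegrable a b
  have h1 : G w m (t + π) = G w m t + ∫ s in t..(t + π), (F w m s)⁻¹ := by
    rw [G, G, ← intervalIntegral.integral_add_adjacent_intervals (hint 0 t) (hint t (t+π))]
  rw [h1, invF_periodic.intervalIntegral_add_eq t 0]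
  simp [G]

lemma Q_even (θ : ℝ) : Q w m (-θ) = Q w m θ := by unfold Q; rw [Real.cos_neg]

lemma G_neg (t : ℝ) : G w m (-t) = - G w m t := by
  have hfe : (fun s : ℝ => (F w m (-s))⁻¹) = fun s => (F w m s)⁻¹ := by
    funext s; rw [F, Q_even]; rfl
  have h := intervalIntegral.integral_comp_neg (a := -t) (b := 0) (fun s => (F w m s)⁻¹)
  rw [hfe] at h
  simp only [neg_zero, neg_neg] at h
  rw [G, G, ← h, intervalIntegral.integral_symm]


lemma m_sq_pos (hw : 0 < w) (hm : 3 * w < m ^ 4) : (0:ℝ) < m ^ 2 := by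
  have hmne : m ≠ 0 := by intro h; rw [h] at hm; norm_num at hm; linarith
  exact lt_of_le_of_ne (sq_nonneg m) (Ne.symm (pow_ne_zero 2 hmne))

lemma continuous_G (hw : 0 < w) (hm : 3 * w < m ^ 4) : Continuous (G w m) :=
  continuous_iff_continuousAt.mpr fun t => (hasDerivAt_G hw hm t).continuousAt

lemma G_lower (hw : 0 < w) (hm : 3 * w < m ^ 4) {t : ℝ} (ht : 0 ≤ t) :
    t / m ^ 2 ≤ G w m t := by
  have hm2 := m_sq_pos hw hm
  have hmono : ∀ s ∈ Set.Icc (0:ℝ) t, (m ^ 2)⁻¹ ≤ (F w m s)⁻¹ := fun s _ =>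
    inv_anti₀ (F_pos hw hm s) (F_le hw s)
  calc t / m ^ 2 = ∫ _ in (0:ℝ)..t, (m ^ 2)⁻¹ := by simp [div_eq_mul_inv]
    _ ≤ G w m t :=
        intervalIntegral.integral_mono_on ht intervalIntegrable_const
          ((continuous_invF hw hm).intervalIntegrable 0 t) hmono

lemma G_upper_neg (hw : 0 < w) (hm : 3 * w < m ^ 4) {t : ℝ} (ht : t ≤ 0) :
    G w m t ≤ t / m ^ 2 := by
  have h := G_lower hw hm (t := -t) (by linarith)
  rw [G_neg, neg_div] at h
  linarith

lemma surjective_G (hw : 0 < w) (hm : 3 * w < m ^ 4) : Function.Surjective (G w m) := by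
  have hm2 := m_sq_pos hw hm
  have htop : Tendsto (G w m) atTop atTop := by
    apply tendsto_atTop_mono' _ _ (tendsto_id.atTop_div_const hm2)
    filter_upwards [eventually_ge_atTop (0:ℝ)] with t ht
    exact G_lower hw hm ht
  have hbot : Tendsto (G w m) atBot atBot := by
    apply tendsto_atBot_mono' _ _ (tendsto_id.atBot_div_const hm2)
    filter_upwards [eventually_le_atBot (0:ℝ)] with t ht
    exact G_upper_neg hw hm ht
  exact (continuous_G hw hm).surjective htop hbot

/-- Derivative of `Q`. -/
def Qd (m y : ℝ) : ℝ := m ^ 4 * (2 * Real.cos y * -Real.sin y + 4 * Real.cos y ^ 3 * -Real.sin y) / 3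

lemma hasDerivAt_Q (y : ℝ) : HasDerivAt (Q w m) (Qd m y) y := by
  have h2 : HasDerivAt (fun t : ℝ => Real.cos t ^ 2) (2 * Real.cos y ^ 1 * -Real.sin y) y :=
    (Real.hasDerivAt_cos y).pow 2
  have h4 : HasDerivAt (fun t : ℝ => Real.cos t ^ 4) (4 * Real.cos y ^ 3 * -Real.sin y) y :=
    (Real.hasDerivAt_cos y).pow 4
  have := (((hasDerivAt_const y (1:ℝ)).add h2).add h4).const_mul (m ^ 4) |>.div_const 3
    |>.sub_const w
  refine this.congr_deriv ?_
  rw [Qd]; ring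

lemma hasDerivAt_F (hw : 0 < w) (hm : 3 * w < m ^ 4) (y : ℝ) :
    HasDerivAt (F w m) (Qd m y / (2 * F w m y)) y :=
  (hasDerivAt_Q y).sqrt (ne_of_gt (Q_pos hw hm y))

theorem master (w m L : ℝ) (hw : 0 < w) (hm : 3 * w < m ^ 4)
    (hper : G w m π = L / 2) :
    ∃ φ : ℝ → ℝ,
      ContDiff ℝ (⊤ : ℕ∞) φ ∧
      (∀ x, φ (-x) = φ x) ∧
      (¬ ∃ k : ℝ, ∀ x, φ x = k) ∧
      Function.Periodic φ L ∧
      (∃ z₁ z₂, z₁ ∈ Set.Ico (0 : ℝ) L ∧ z₂ ∈ Set.Ico (0 : ℝ) L ∧ z₁ ≠ z₂ ∧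
        ∀ x ∈ Set.Ico (0 : ℝ) L, (φ x = 0 ↔ x = z₁ ∨ x = z₂)) ∧
      (∀ x, -(deriv (deriv φ) x) + w * φ x - φ x ^ 5 = 0) := by
  have hmne : m ≠ 0 := by intro h; rw [h] at hm; norm_num at hm; linarith
  have hGsm := strictMono_G hw hm
  set iso := StrictMono.orderIsoOfSurjective (G w m) hGsm (surjective_G hw hm) with hiso
  set θf : ℝ → ℝ := fun x => iso.symm x with hθf
  have hGθ : ∀ x, G w m (θf x) = x := by
    intro x
    have := iso.apply_symm_apply x
    rwa [show (iso (iso.symm x) : ℝ) = G w m (iso.symm x) from congrFun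
      (StrictMono.coe_orderIsoOfSurjective _ _ _) _] at this
  have hθG : ∀ t, θf (G w m t) = t := fun t =>
    StrictMono.orderIsoOfSurjective_symm_apply_self _ hGsm (surjective_G hw hm) t
  have θcont : Continuous θf := iso.symm.continuous
  have θmono : StrictMono θf := iso.symm.strictMono
  have hθx : ∀ x, HasDerivAt θf (F w m (θf x)) x := by
    intro x
    have h1 : HasDerivAt (G w m) ((F w m (θf x))⁻¹) (θf x) := hasDerivAt_G hw hm _
    have h2 := h1.of_local_left_inverse θcont.continuousAt
      (inv_ne_zero (ne_of_gt (F_pos hw hm _))) (Filter.Eventually.of_forall hGθ)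
    simpa using h2
  have hθ0 : θf 0 = 0 := by
    have := hθG 0; rwa [G_zero] at this
  have key : ∀ x, θf (x + L) = θf x + 2 * π := by
    intro x
    have h : G w m (θf x + 2 * π) = x + L := by
      have h1 : θf x + 2 * π = θf x + π + π := by ring
      rw [h1, G_add_pi hw hm, G_add_pi hw hm, hGθ, hper]; ring
    rw [← h, hθG]
  have θodd : ∀ x, θf (-x) = -θf x := by
    intro x
    have h : G w m (-θf x) = -x := by rw [G_neg, hGθ]
    rw [← h, hθG]
  have θsmooth : ∀ n : ℕ, ContDiff ℝ (n : WithTop ℕ∞) θf := by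
    intro n
    induction n with
    | zero => exact contDiff_zero.mpr θcont
    | succ k ih =>
      have hcast : ((k + 1 : ℕ) : WithTop ℕ∞) = (k : WithTop ℕ∞) + 1 := by push_cast; rfl
      rw [hcast, contDiff_succ_iff_deriv]
      refine ⟨fun x => (hθx x).differentiableAt, fun h => absurd h (by simp), ?_⟩
      have hd : deriv θf = fun x => F w m (θf x) := funext fun x => (hθx x).deriv
      rw [hd]
      exact ((contDiff_F hw hm).of_le (by exact_mod_cast le_top)).comp ih
  set φ : ℝ → ℝ := fun x => m * Real.cos (θf x) with hφ
  -- derivative of φ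
  set ψ : ℝ → ℝ := fun x => m * (-Real.sin (θf x) * F w m (θf x)) with hψ
  have hφ' : ∀ x, HasDerivAt φ (ψ x) x := by
    intro x
    exact ((Real.hasDerivAt_cos (θf x)).comp x (hθx x)).const_mul m
  have hderivφ : deriv φ = ψ := funext fun x => (hφ' x).deriv
  have hψ' : ∀ x, HasDerivAt ψ
      (m * ((-Real.cos (θf x) * F w m (θf x)) * F w m (θf x)
        + -Real.sin (θf x) * (Qd m (θf x) / (2 * F w m (θf x)) * F w m (θf x)))) x := by
    intro x
    have h1 : HasDerivAt (fun y => -Real.sin (θf y)) (-(Real.cos (θf x) * F w m (θf x))) x :=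
      ((Real.hasDerivAt_sin (θf x)).comp x (hθx x)).neg
    have h2 : HasDerivAt (fun y => F w m (θf y))
        (Qd m (θf x) / (2 * F w m (θf x)) * F w m (θf x)) x :=
      (hasDerivAt_F hw hm (θf x)).comp x (hθx x)
    have := (h1.mul h2).const_mul m
    refine this.congr_deriv ?_
    ring
  have hODE : ∀ x, -(deriv (deriv φ) x) + w * φ x - φ x ^ 5 = 0 := by
    intro x
    rw [hderivφ, (hψ' x).deriv]
    have hFne : F w m (θf x) ≠ 0 := ne_of_gt (F_pos hw hm _)
    have hFF : F w m (θf x) * F w m (θf x) = Q w m (θf x) :=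
      Real.mul_self_sqrt (le_of_lt (Q_pos hw hm _))
    have hdiv : Qd m (θf x) / (2 * F w m (θf x)) * F w m (θf x) = Qd m (θf x) / 2 := by
      field_simp
    rw [hdiv]
    have hsc : Real.sin (θf x) ^ 2 + Real.cos (θf x) ^ 2 = 1 := Real.sin_sq_add_cos_sq _
    simp only [hφ]
    set cc := Real.cos (θf x)
    set ss := Real.sin (θf x)
    have hFF' : F w m (θf x) * F w m (θf x) = m ^ 4 * (1 + cc ^ 2 + cc ^ 4) / 3 - w := by
      rw [hFF]; rfl
    have hQd' : Qd m (θf x) = m ^ 4 * (2 * cc * -ss + 4 * cc ^ 3 * -ss) / 3 := rfl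
    linear_combination (m * cc) * hFF' + (m * ss / 2) * hQd'
      + (-(m ^ 5 * (cc + 2 * cc ^ 3)) / 3) * hsc
  -- endpoints of the zero set
  have hGL : G w m (2 * π) = L := by
    have : (2 : ℝ) * π = π + π := by ring
    rw [this, G_add_pi hw hm, hper]; ring
  have hθL : θf L = 2 * π := by
    have := key 0
    rw [zero_add, hθ0, zero_add] at this
    exact this
  set z₁ := G w m (π / 2) with hz₁
  set z₂ := G w m (3 * π / 2) with hz₂
  have hπ := Real.pi_pos
  have hz₁mem : z₁ ∈ Set.Ico (0 : ℝ) L := by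
    constructor
    · rw [← G_zero (w := w) (m := m)]
      exact (hGsm.le_iff_le).mpr (by linarith)
    · rw [← hGL]
      exact hGsm (by linarith)
  have hz₂mem : z₂ ∈ Set.Ico (0 : ℝ) L := by
    constructor
    · rw [← G_zero (w := w) (m := m)]
      exact (hGsm.le_iff_le).mpr (by linarith)
    · rw [← hGL]
      exact hGsm (by linarith)
  have hz₁₂ : z₁ ≠ z₂ := by
    intro h
    have := hGsm.injective h
    linarith
  refine ⟨φ, ?_, ?_, ?_, ?_, ⟨z₁, z₂, hz₁mem, hz₂mem, hz₁₂, ?_⟩, hODE⟩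
  · -- smoothness
    rw [show ((⊤ : ℕ∞) : WithTop ℕ∞) = (⊤ : ℕ∞) from rfl]
    apply contDiff_infty.mpr
    intro n
    exact contDiff_const.mul ((Real.contDiff_cos.of_le (by exact_mod_cast le_top)).comp
      (θsmooth n))
  · -- even
    intro x
    simp only [hφ, θodd, Real.cos_neg]
  · -- nonconstant
    rintro ⟨k, hk⟩
    have h0 : φ 0 = m := by simp [hφ, hθ0]
    have h1 : φ z₁ = 0 := by
      have : θf z₁ = π / 2 := hθG _
      simp [hφ, this]
    rw [hk 0] at h0
    rw [hk z₁] at h1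
    exact hmne (by rw [← h0, h1])
  · -- periodic
    intro x
    simp only [hφ, key, Real.cos_add_two_pi]
  · -- zeros
    intro x hx
    constructor
    · intro hx0
      have hcos : Real.cos (θf x) = 0 := by
        have := hx0
        simp only [hφ] at this
        exact (mul_eq_zero.mp this).resolve_left hmne
      obtain ⟨k, hk⟩ := Real.cos_eq_zero_iff.mp hcos
      have hθlb : 0 ≤ θf x := by
        rw [← hθ0]
        exact θmono.le_iff_le.mpr hx.1
      have hθub : θf x < 2 * π := by
        rw [← hθL]
        exact θmono hx.2
      rw [hk] at hθlb hθub
      have hk0 : (0 : ℝ) ≤ 2 * k + 1 := by nlinarith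
      have hk4 : (2 : ℝ) * k + 1 < 4 := by nlinarith
      have hkint : k = 0 ∨ k = 1 := by
        have ha : (0 : ℤ) ≤ 2 * k + 1 := by exact_mod_cast hk0
        have hb : (2 : ℤ) * k + 1 < 4 := by exact_mod_cast hk4
        omega
      rcases hkint with rfl | rfl
      · left
        rw [show ((2 : ℝ) * (0 : ℤ) + 1) * π / 2 = π / 2 by push_cast; ring] at hk
        rw [← hGθ x, hk, ← hz₁]
      · right
        rw [show ((2 : ℝ) * (1 : ℤ) + 1) * π / 2 = 3 * π / 2 by push_cast; ring] at hk
        rw [← hGθ x, hk, ← hz₂]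
    · rintro (rfl | rfl)
      · have : θf z₁ = π / 2 := hθG _
        simp [hφ, this]
      · have : θf z₂ = 3 * π / 2 := hθG _
        simp only [hφ, this]
        rw [show (3 : ℝ) * π / 2 = π + π / 2 by ring, Real.cos_add, Real.cos_pi_div_two]
        simp

/-- Continuity of the half-period in the amplitude parameter. -/
lemma continuousAt_period (hw : 0 < w) {r₀ : ℝ} (h0 : 0 < r₀) (hr : 3 * w < r₀ ^ 4) :
    ContinuousAt (fun r => G w r π) r₀ := by
  set a : ℝ := Real.sqrt (Real.sqrt ((3 * w + r₀ ^ 4) / 2)) with ha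
  have hX : (0:ℝ) < (3 * w + r₀ ^ 4) / 2 := by nlinarith
  have ha4 : a ^ 4 = (3 * w + r₀ ^ 4) / 2 := by
    rw [ha, show (4:ℕ) = 2 * 2 from rfl, pow_mul, sq_sqrt (Real.sqrt_nonneg _),
      sq_sqrt (le_of_lt hX)]
  have haw : 3 * w < a ^ 4 := by rw [ha4]; linarith
  have ha0 : 0 < a := by
    rw [ha]; positivity
  have halt : a < r₀ := by
    by_contra h
    push_neg at h
    have : r₀ ^ 4 ≤ a ^ 4 := pow_le_pow_left₀ (le_of_lt h0) h 4
    rw [ha4] at this; linarith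
  have hQlb : ∀ r : ℝ, a < r → ∀ θ, a ^ 4 / 3 - w ≤ Q w r θ := by
    intro r hr' θ
    have hr4 : a ^ 4 ≤ r ^ 4 := pow_le_pow_left₀ (le_of_lt ha0) (le_of_lt hr') 4
    have := Q_lower hw (lt_of_lt_of_le haw hr4) θ
    have h2 : a ^ 4 / 3 ≤ r ^ 4 / 3 := by linarith
    linarith
  have hbnd : (0:ℝ) < a ^ 4 / 3 - w := by linarith
  have hev : ∀ᶠ r in nhds r₀, a < r := eventually_gt_nhds halt
  apply intervalIntegral.continuousAt_of_dominated_interval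
    (bound := fun _ => (Real.sqrt (a ^ 4 / 3 - w))⁻¹)
  · filter_upwards [hev] with r hr'
    have h3 : 3 * w < r ^ 4 := by
      have : a ^ 4 ≤ r ^ 4 := pow_le_pow_left₀ (le_of_lt ha0) (le_of_lt hr') 4
      linarith
    exact (continuous_invF hw h3).aestronglyMeasurable
  · filter_upwards [hev] with r hr'
    apply Filter.Eventually.of_forall
    intro θ _
    have h3 : 3 * w < r ^ 4 := by
      have : a ^ 4 ≤ r ^ 4 := pow_le_pow_left₀ (le_of_lt ha0) (le_of_lt hr') 4
      linarith
    have hFpos := F_pos hw h3 θ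
    rw [Real.norm_eq_abs, abs_of_pos (inv_pos.mpr hFpos)]
    apply inv_anti₀ (Real.sqrt_pos.mpr hbnd)
    exact Real.sqrt_le_sqrt (hQlb r hr' θ)
  · exact intervalIntegrable_const
  · apply Filter.Eventually.of_forall
    intro θ _
    have hQc : ContinuousAt (fun r : ℝ => Q w r θ) r₀ := by
      apply ContinuousAt.sub _ continuousAt_const
      exact (((continuousAt_pow r₀ 4).mul continuousAt_const).div_const 3)
    have hFne : F w r₀ θ ≠ 0 := ne_of_gt (F_pos hw hr θ)
    have hFc : ContinuousAt (fun r : ℝ => F w r θ) r₀ :=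
      Real.continuous_sqrt.continuousAt.comp hQc
    exact hFc.inv₀ hFne

lemma period_le (hw : 0 < w) (hm : 3 * w < m ^ 4) :
    G w m π ≤ π * (Real.sqrt (m ^ 4 / 3 - w))⁻¹ := by
  have hb : (0:ℝ) < m ^ 4 / 3 - w := by linarith
  have hmono : ∀ θ ∈ Set.Icc (0:ℝ) π, (F w m θ)⁻¹ ≤ (Real.sqrt (m ^ 4 / 3 - w))⁻¹ := by
    intro θ _
    exact inv_anti₀ (Real.sqrt_pos.mpr hb) (Real.sqrt_le_sqrt (Q_lower hw hm θ))
  calc G w m π ≤ ∫ _ in (0:ℝ)..π, (Real.sqrt (m ^ 4 / 3 - w))⁻¹ :=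
        intervalIntegral.integral_mono_on Real.pi_pos.le
          ((continuous_invF hw hm).intervalIntegrable 0 π) intervalIntegrable_const hmono
    _ = π * (Real.sqrt (m ^ 4 / 3 - w))⁻¹ := by simp

lemma period_ge {δ a : ℝ} (hw : 0 < w) (hδ : 0 < δ) (ha0 : 0 < a)
    (ha4 : a ^ 4 = 3 * w + 3 * δ) (hu1 : Real.sqrt δ / a ^ 2 ≤ 1) :
    (Real.sqrt 2 * a ^ 2)⁻¹ * Real.log (a ^ 2 / Real.sqrt δ) ≤ G w a π := by
  have hm : 3 * w < a ^ 4 := by rw [ha4]; linarith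
  have ha2 : (0:ℝ) < a ^ 2 := by positivity
  set u₀ : ℝ := Real.sqrt δ / a ^ 2 with hu₀
  have hu₀pos : 0 < u₀ := div_pos (Real.sqrt_pos.mpr hδ) ha2
  have hπ2 : (2:ℝ) ≤ π := by linarith [Real.pi_gt_three]
  have hs2 : (0:ℝ) < Real.sqrt 2 := Real.sqrt_pos.mpr (by norm_num)
  have hIle : π/2 + u₀ ≤ π/2 + 1 := by linarith
  -- pointwise comparison on the inner interval
  have hpt : ∀ θ ∈ Set.Icc (π/2 + u₀) (π/2 + 1),
      (Real.sqrt 2 * a ^ 2 * (θ - π/2))⁻¹ ≤ (F w a θ)⁻¹ := by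
    intro θ hθ
    set u : ℝ := θ - π/2 with hu
    have hu₀u : u₀ ≤ u := by simp only [hu]; linarith [hθ.1]
    have hupos : 0 < u := lt_of_lt_of_le hu₀pos hu₀u
    have hθu : θ = u + π/2 := by rw [hu]; ring
    clear_value u
    have hδle : δ ≤ a ^ 4 * u ^ 2 := by
      have h1 : Real.sqrt δ ≤ a ^ 2 * u := by
        rw [hu₀, div_le_iff₀ ha2] at hu₀u
        linarith [hu₀u]
      have h2 : Real.sqrt δ ^ 2 ≤ (a ^ 2 * u) ^ 2 :=
        pow_le_pow_left₀ (Real.sqrt_nonneg _) h1 2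
      rw [Real.sq_sqrt hδ.le] at h2
      nlinarith
    have hsin : Real.sin u ^ 2 ≤ u ^ 2 := by
      have h2 : |Real.sin u| ≤ |u| := Real.abs_sin_le_abs
      have h3 := mul_self_le_mul_self (abs_nonneg _) h2
      rw [abs_mul_abs_self, abs_mul_abs_self] at h3
      nlinarith
    have hcos : Real.cos θ ^ 2 ≤ u ^ 2 := by
      have h1 : Real.cos θ = -Real.sin u := by
        rw [hθu]
        rw [Real.cos_add, Real.cos_pi_div_two, Real.sin_pi_div_two]
        ring
      rw [h1]; nlinarith
    have hc4 : Real.cos θ ^ 4 ≤ Real.cos θ ^ 2 := by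
      nlinarith [Real.cos_sq_le_one θ, sq_nonneg (Real.cos θ)]
    have hQle : Q w a θ ≤ 2 * a ^ 4 * u ^ 2 := by
      have hQ1 : Q w a θ ≤ δ + a ^ 4 * u ^ 2 := by
        have hwd : (0:ℝ) ≤ w + δ := by linarith
        have h1 : (w + δ) * (Real.cos θ ^ 2 + Real.cos θ ^ 4) ≤ (w + δ) * (2 * u ^ 2) :=
          mul_le_mul_of_nonneg_left (by linarith) hwd
        have h2 : 0 ≤ (w + δ) * u ^ 2 := mul_nonneg hwd (sq_nonneg u)
        rw [Q, ha4]
        nlinarith [h1, h2]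
      linarith
    have hFle : F w a θ ≤ Real.sqrt 2 * a ^ 2 * u := by
      have h1 : Real.sqrt (Q w a θ) ≤ Real.sqrt (2 * a ^ 4 * u ^ 2) :=
        Real.sqrt_le_sqrt hQle
      have h2 : Real.sqrt (2 * a ^ 4 * u ^ 2) = Real.sqrt 2 * a ^ 2 * u := by
        rw [show 2 * a ^ 4 * u ^ 2 = (Real.sqrt 2 * a ^ 2 * u) ^ 2 by
          rw [mul_pow, mul_pow, Real.sq_sqrt (by norm_num : (0:ℝ) ≤ 2)]; ring]
        exact Real.sqrt_sq (by positivity)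
      rw [← h2]; exact h1
    exact inv_anti₀ (F_pos hw hm θ) hFle
  -- integrability of the comparison function
  have hcontOn : ContinuousOn (fun θ : ℝ => (Real.sqrt 2 * a ^ 2 * (θ - π/2))⁻¹)
      (Set.uIcc (π/2 + u₀) (π/2 + 1)) := by
    rw [Set.uIcc_of_le hIle]
    apply ContinuousOn.inv₀
    · exact (continuous_const.mul (continuous_id.sub continuous_const)).continuousOn
    · intro θ hθ
      have : 0 < θ - π/2 := by linarith [hθ.1, hu₀pos]
      positivity
  have hint1 : IntervalIntegrable (fun θ : ℝ => (Real.sqrt 2 * a ^ 2 * (θ - π/2))⁻¹)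
      volume (π/2 + u₀) (π/2 + 1) := hcontOn.intervalIntegrable
  have hstep1 : ∫ θ in (π/2 + u₀)..(π/2 + 1), (Real.sqrt 2 * a ^ 2 * (θ - π/2))⁻¹
      ≤ ∫ θ in (π/2 + u₀)..(π/2 + 1), (F w a θ)⁻¹ :=
    intervalIntegral.integral_mono_on hIle hint1
      ((continuous_invF hw hm).intervalIntegrable _ _) hpt
  have hstep2 : ∫ θ in (π/2 + u₀)..(π/2 + 1), (F w a θ)⁻¹ ≤ G w a π := by
    apply intervalIntegral.integral_mono_interval (by linarith [hu₀pos] : (0:ℝ) ≤ π/2 + u₀)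
      hIle (by linarith : π/2 + 1 ≤ π)
    · exact Filter.Eventually.of_forall fun θ => inv_nonneg.mpr (F_pos hw hm θ).le
    · exact (continuous_invF hw hm).intervalIntegrable 0 π
  have heval : ∫ θ in (π/2 + u₀)..(π/2 + 1), (Real.sqrt 2 * a ^ 2 * (θ - π/2))⁻¹
      = (Real.sqrt 2 * a ^ 2)⁻¹ * Real.log (a ^ 2 / Real.sqrt δ) := by
    have h := intervalIntegral.integral_comp_sub_right
      (a := π/2 + u₀) (b := π/2 + 1) (fun v => (Real.sqrt 2 * a ^ 2 * v)⁻¹) (π/2)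
    rw [show π/2 + u₀ - π/2 = u₀ by ring, show π/2 + 1 - π/2 = (1:ℝ) by ring] at h
    rw [h]
    have h2 : ∀ v : ℝ, (Real.sqrt 2 * a ^ 2 * v)⁻¹ = (Real.sqrt 2 * a ^ 2)⁻¹ * v⁻¹ :=
      fun v => by rw [mul_inv]
    simp only [h2]
    rw [intervalIntegral.integral_const_mul, integral_inv_of_pos hu₀pos one_pos]
    congr 1
    rw [hu₀, one_div, inv_div]
  calc (Real.sqrt 2 * a ^ 2)⁻¹ * Real.log (a ^ 2 / Real.sqrt δ)
      = ∫ θ in (π/2 + u₀)..(π/2 + 1), (Real.sqrt 2 * a ^ 2 * (θ - π/2))⁻¹ := heval.symm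
    _ ≤ ∫ θ in (π/2 + u₀)..(π/2 + 1), (F w a θ)⁻¹ := hstep1
    _ ≤ G w a π := hstep2

lemma quartic_root_pow {X : ℝ} (hX : 0 ≤ X) : (Real.sqrt (Real.sqrt X)) ^ 4 = X := by
  rw [show (4:ℕ) = 2 * 2 from rfl, pow_mul, Real.sq_sqrt (Real.sqrt_nonneg X),
    Real.sq_sqrt hX]

lemma quartic_root_sq (X : ℝ) : (Real.sqrt (Real.sqrt X)) ^ 2 = Real.sqrt X :=
  Real.sq_sqrt (Real.sqrt_nonneg X)

end CnoidalAux

open CnoidalAux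

set_option maxHeartbeats 1000000 in
theorem stmt_0 (L : ℝ) (hL : L > 2 * Real.pi) (c : ℝ) (hc : c ∈ Set.Ioo (-1 : ℝ) 1)
    (hω : 1 - c ^ 2 ∈ Set.Ioo (4 * Real.pi ^ 2 / L ^ 2) 1) :
    ∃ φ : ℝ → ℝ,
      ContDiff ℝ (⊤ : ℕ∞) φ ∧
      (∀ x, φ (-x) = φ x) ∧
      (¬ ∃ k : ℝ, ∀ x, φ x = k) ∧
      Function.Periodic φ L ∧
      (∃ z₁ z₂, z₁ ∈ Set.Ico (0 : ℝ) L ∧ z₂ ∈ Set.Ico (0 : ℝ) L ∧ z₁ ≠ z₂ ∧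
        ∀ x ∈ Set.Ico (0 : ℝ) L, (φ x = 0 ↔ x = z₁ ∨ x = z₂)) ∧
      (∀ x, -(deriv (deriv φ) x) + (1 - c ^ 2) * φ x - φ x ^ 5 = 0) := by
  set w : ℝ := 1 - c ^ 2 with hwdef
  have hπ3 : (3:ℝ) < π := Real.pi_gt_three
  have hL1 : (1:ℝ) < L := by nlinarith
  have hL0 : (0:ℝ) < L := by linarith
  have hw1 : w < 1 := hω.2
  have hwL : 4 * π ^ 2 / L ^ 2 < w := hω.1
  have hw : 0 < w := lt_trans (by positivity) hwL
  have h3w : 1 / L ^ 2 ≤ 3 * w := by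
    have h1 : 1 / L ^ 2 ≤ 4 * π ^ 2 / L ^ 2 := by
      gcongr
      nlinarith
    linarith
  -- parameters
  set δ' : ℝ := min ((4 * π / L) ^ 2) (Real.exp (-(10 * L)) / L ^ 2) with hδ'def
  have hδ'pos : 0 < δ' := lt_min (by positivity) (by positivity)
  have hδ'le : δ' ≤ Real.exp (-(10 * L)) / L ^ 2 := min_le_right _ _
  have hδ'le' : δ' ≤ (4 * π / L) ^ 2 := min_le_left _ _
  have hexp1 : Real.exp (-(10 * L)) ≤ 1 := Real.exp_le_one_iff.mpr (by linarith)
  have hδ'1 : δ' ≤ 1 := by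
    refine hδ'le.trans ?_
    rw [div_le_one (by positivity)]
    nlinarith
  set b : ℝ := Real.sqrt (Real.sqrt (3 * w + 3 * (4 * π / L) ^ 2)) with hbdef
  set aa : ℝ := Real.sqrt (Real.sqrt (3 * w + 3 * δ')) with haadef
  have hb4 : b ^ 4 = 3 * w + 3 * (4 * π / L) ^ 2 := quartic_root_pow (by positivity)
  have ha4 : aa ^ 4 = 3 * w + 3 * δ' := quartic_root_pow (by positivity)
  have ha0 : 0 < aa := by rw [haadef]; positivity
  have hb0 : 0 < b := by rw [hbdef]; positivity
  have hab : aa ≤ b := by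
    rw [haadef, hbdef]
    exact Real.sqrt_le_sqrt (Real.sqrt_le_sqrt (by linarith))
  have haa2 : aa ^ 2 = Real.sqrt (3 * w + 3 * δ') := quartic_root_sq _
  -- bounds on aa²
  have haa2_lb : 1 / L ≤ aa ^ 2 := by
    rw [haa2]
    have : Real.sqrt (1 / L ^ 2) ≤ Real.sqrt (3 * w + 3 * δ') :=
      Real.sqrt_le_sqrt (by linarith)
    rwa [show (1:ℝ) / L ^ 2 = (1 / L) ^ 2 by ring, Real.sqrt_sq (by positivity)] at this
  have haa2_ub : aa ^ 2 ≤ 5 / 2 := by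
    rw [haa2]
    have h1 : Real.sqrt (3 * w + 3 * δ') ≤ Real.sqrt ((5/2) ^ 2) :=
      Real.sqrt_le_sqrt (by nlinarith)
    rwa [Real.sqrt_sq (by norm_num)] at h1
  have hsqδ' : Real.sqrt δ' ≤ Real.exp (-(5 * L)) / L := by
    have h1 : Real.sqrt δ' ≤ Real.sqrt (Real.exp (-(10 * L)) / L ^ 2) :=
      Real.sqrt_le_sqrt hδ'le
    have h9 : Real.exp (-(5 * L)) ^ 2 = Real.exp (-(10 * L)) := by
      rw [pow_two, ← Real.exp_add, show -(5*L) + -(5*L) = -(10*L) by ring]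
    rwa [show Real.exp (-(10 * L)) / L ^ 2 = (Real.exp (-(5 * L)) / L) ^ 2 by
      rw [div_pow, h9], Real.sqrt_sq (by positivity)] at h1
  have hu1 : Real.sqrt δ' / aa ^ 2 ≤ 1 := by
    have h1 : Real.sqrt δ' / aa ^ 2 ≤ (Real.exp (-(5 * L)) / L) / (1 / L) :=
      div_le_div₀ (by positivity) hsqδ' (by positivity) haa2_lb
    have h2 : (Real.exp (-(5 * L)) / L) / (1 / L) = Real.exp (-(5 * L)) := by
      field_simp
    rw [h2] at h1
    exact h1.trans (Real.exp_le_one_iff.mpr (by linarith))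
  have hδspos : 0 < Real.sqrt δ' := Real.sqrt_pos.mpr hδ'pos
  have hlog : (5:ℝ) * L ≤ Real.log (aa ^ 2 / Real.sqrt δ') := by
    have h1 : Real.exp (5 * L) ≤ aa ^ 2 / Real.sqrt δ' := by
      rw [le_div_iff₀ hδspos]
      calc Real.exp (5 * L) * Real.sqrt δ'
          ≤ Real.exp (5 * L) * (Real.exp (-(5 * L)) / L) :=
            mul_le_mul_of_nonneg_left hsqδ' (Real.exp_pos _).le
        _ = 1 / L := by
            rw [← mul_div_assoc, ← Real.exp_add, show 5 * L + -(5 * L) = 0 by ring,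
              Real.exp_zero]
        _ ≤ aa ^ 2 := haa2_lb
    have h2 := (Real.log_le_log_iff (Real.exp_pos _) (by positivity)).mpr h1
    rwa [Real.log_exp] at h2
  have hcoef : (1:ℝ) / 4 ≤ (Real.sqrt 2 * aa ^ 2)⁻¹ := by
    have hs : Real.sqrt 2 ≤ 3 / 2 := by
      rw [show (3 / 2 : ℝ) = Real.sqrt ((3 / 2) ^ 2) by
        rw [Real.sqrt_sq (by norm_num)]]
      exact Real.sqrt_le_sqrt (by norm_num)
    have h1 : Real.sqrt 2 * aa ^ 2 ≤ 4 := by nlinarith [Real.sqrt_nonneg 2, sq_nonneg aa]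
    have h2 : (0:ℝ) < Real.sqrt 2 * aa ^ 2 := by positivity
    have h3 := inv_anti₀ h2 h1
    rw [show ((4:ℝ))⁻¹ = 1 / 4 by norm_num] at h3
    exact h3
  have hPa : L / 2 ≤ G w aa π := by
    have h0 := period_ge hw hδ'pos ha0 ha4 hu1
    have h1 : L / 2 ≤ (Real.sqrt 2 * aa ^ 2)⁻¹ * Real.log (aa ^ 2 / Real.sqrt δ') := by
      calc L / 2 ≤ (1 / 4) * (5 * L) := by linarith
        _ ≤ (Real.sqrt 2 * aa ^ 2)⁻¹ * Real.log (aa ^ 2 / Real.sqrt δ') :=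
            mul_le_mul hcoef hlog (by linarith) (le_trans (by norm_num) hcoef)
    linarith
  have hPb : G w b π ≤ L / 2 := by
    have hb4w : 3 * w < b ^ 4 := by
      rw [hb4]
      have : (0:ℝ) < (4 * π / L) ^ 2 := by positivity
      linarith
    have h0 := period_le hw hb4w
    have h1 : b ^ 4 / 3 - w = (4 * π / L) ^ 2 := by rw [hb4]; ring
    rw [h1, Real.sqrt_sq (by positivity : (0:ℝ) ≤ 4 * π / L)] at h0
    have h3 : π * (4 * π / L)⁻¹ = L / 4 := by
      field_simp
    rw [h3] at h0
    linarith
  have hcont : ContinuousOn (fun r => G w r π) (Set.Icc aa b) := by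
    intro r hr
    have hr0 : 0 < r := lt_of_lt_of_le ha0 hr.1
    have hr4 : 3 * w < r ^ 4 := by
      have h := pow_le_pow_left₀ ha0.le hr.1 4
      rw [ha4] at h
      linarith
    exact (continuousAt_period hw hr0 hr4).continuousWithinAt
  have hmem : L / 2 ∈ Set.Icc ((fun r => G w r π) b) ((fun r => G w r π) aa) :=
    ⟨hPb, hPa⟩
  obtain ⟨m, hmIcc, hPm⟩ := intermediate_value_Icc' hab hcont hmem
  have hm4 : 3 * w < m ^ 4 := by
    have h := pow_le_pow_left₀ ha0.le hmIcc.1 4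
    rw [ha4] at h
    linarith
  exact master w m L hw hm4 hPm
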